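/- Assume good X and good Y. Then freshness for a substituted term decomposes into freshness for its participants: fresh zs z (X[Y/y]_ys) if and only if ((zs,z) = (ys,y) or fresh zs z X) and (fresh ys y X or fresh zs z Y). -/

import Mathlib

open scoped Classical

universe u

section Binding

variable (var varsort index bindex opsym : Type u)

/-! ### Inputs -/

/-- An `(α,β)`-input: a partial function from `α` to `β`. -/
abbrev Input (α β : Type u) : Type u := α → Option β

/-- The domain of an input. -/
def idom {α β : Type u} (inp : Input α β) : Set α := {a | inp a ≠ none}

/-- The componentwise lifting of a predicate to inputs. -/
def liftP {α β : Type u} (P : β → Prop) (inp : Input α β) : Prop :=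
  ∀ a b, inp a = some b → P b

/-- The componentwise lifting of a function to inputs. -/
def liftF {α β γ : Type u} (f : β → γ) (inp : Input α β) : Input α γ :=
  fun a => (inp a).map f

/-- An input is small if its domain has cardinality smaller than that of `var`. -/
def smallDom {α β : Type u} (inp : Input α β) : Prop :=
  Cardinal.mk (idom inp) < Cardinal.mk var

/-! ### Quasiterms -/

mutual
/-- Quasiterms: raw terms before quotienting by alpha-equivalence. -/
inductive QTerm : Type u where
  | qVar : varsort → var → QTerm
  | qOp : opsym → (index → Option QTerm) → (bindex → Option QAbs) → QTerm
/-- Quasiabstractions. -/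
inductive QAbs : Type u where
  | qAbs : varsort → var → QTerm → QAbs
end

/-- Transposition of two variables. -/
noncomputable def swapVar (z1 z2 x : var) : var :=
  if x = z1 then z2 else if x = z2 then z1 else x

/-- Sort-aware transposition of variables (acts only on variables of varsort `zs`). -/
noncomputable def swapVarS (zs xs : varsort) (z1 z2 x : var) : var :=
  if xs = zs then swapVar var z1 z2 x else x

variable {var varsort index bindex opsym}

/-- Swapping of the variables `z1`, `z2` at varsort `zs` in a quasiterm
(transposing them everywhere, including binding positions). -/
noncomputable def qSwap (z1 z2 : var) (zs : varsort) :
    QTerm var varsort index bindex opsym → QTerm var varsort index bindex opsym :=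
  QTerm.rec (motive_1 := fun _ => QTerm var varsort index bindex opsym)
    (motive_2 := fun _ => QAbs var varsort index bindex opsym)
    (motive_3 := fun _ => Option (QTerm var varsort index bindex opsym))
    (motive_4 := fun _ => Option (QAbs var varsort index bindex opsym))
    (fun xs x => .qVar xs (swapVarS var varsort zs xs z1 z2 x))
    (fun d _ _ rinp rbinp => .qOp d rinp rbinp)
    (fun xs x _ rX => .qAbs xs (swapVarS var varsort zs xs z1 z2 x) rX)
    none (fun _ r => some r) none (fun _ r => some r)

/-- Swapping of variables in a quasiabstraction. -/
noncomputable def qSwapAbs (z1 z2 : var) (zs : varsort) :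
    QAbs var varsort index bindex opsym → QAbs var varsort index bindex opsym
  | .qAbs xs x X => .qAbs xs (swapVarS var varsort zs xs z1 z2 x) (qSwap z1 z2 zs X)

/-! ### Freshness and goodness -/

mutual
/-- `QFresh ys y X`: the variable `y` of varsort `ys` has no free occurrence in `X`. -/
inductive QFresh : varsort → var → QTerm var varsort index bindex opsym → Prop where
  | qVar : ∀ {ys y xs x}, (ys, y) ≠ (xs, x) → QFresh ys y (.qVar xs x)
  | qOp : ∀ {ys y d inp binp}, (∀ i X, inp i = some X → QFresh ys y X) →
      (∀ j A, binp j = some A → QFreshAbs ys y A) → QFresh ys y (.qOp d inp binp)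
/-- Freshness for quasiabstractions. -/
inductive QFreshAbs : varsort → var → QAbs var varsort index bindex opsym → Prop where
  | qAbs_bound : ∀ {xs x X}, QFreshAbs xs x (.qAbs xs x X)
  | qAbs_body : ∀ {ys y xs x X}, QFresh ys y X → QFreshAbs ys y (.qAbs xs x X)
end

mutual
/-- Good quasiterms: all constructors branch less than `|var|`. -/
inductive QGood : QTerm var varsort index bindex opsym → Prop where
  | qVar : ∀ {xs x}, QGood (.qVar xs x)
  | qOp : ∀ {d inp binp}, (∀ i X, inp i = some X → QGood X) →
      (∀ j A, binp j = some A → QGoodAbs A) →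
      smallDom var inp → smallDom var binp → QGood (.qOp d inp binp)
/-- Good quasiabstractions. -/
inductive QGoodAbs : QAbs var varsort index bindex opsym → Prop where
  | qAbs : ∀ {xs x X}, QGood X → QGoodAbs (.qAbs xs x X)
end

/-! ### Alpha-equivalence -/

mutual
/-- Alpha-equivalence of quasiterms. -/
inductive Alpha : QTerm var varsort index bindex opsym →
    QTerm var varsort index bindex opsym → Prop where
  | qVar : ∀ {xs x}, Alpha (.qVar xs x) (.qVar xs x)
  | qOp : ∀ {d inp binp inp' binp'},
      (∀ i, inp i = none ↔ inp' i = none) →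
      (∀ i X X', inp i = some X → inp' i = some X' → Alpha X X') →
      (∀ j, binp j = none ↔ binp' j = none) →
      (∀ j A A', binp j = some A → binp' j = some A' → AlphaAbs A A') →
      Alpha (.qOp d inp binp) (.qOp d inp' binp')
/-- Alpha-equivalence of quasiabstractions (the exists-fresh formulation). -/
inductive AlphaAbs : QAbs var varsort index bindex opsym →
    QAbs var varsort index bindex opsym → Prop where
  | qAbs : ∀ {xs x x' X X' y}, y ∉ ({x, x'} : Set var) →
      QFresh xs y X → QFresh xs y X' →
      Alpha (qSwap y x xs X) (qSwap y x' xs X') →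
      AlphaAbs (.qAbs xs x X) (.qAbs xs x' X')
end

/-! ### Terms and abstractions as quotients -/

variable (var varsort index bindex opsym)

/-- Terms: quasiterms modulo alpha-equivalence. -/
def Term : Type u := Quot (@Alpha var varsort index bindex opsym)

/-- Abstractions: quasiabstractions modulo alpha-equivalence. -/
def Abstr : Type u := Quot (@AlphaAbs var varsort index bindex opsym)

variable {var varsort index bindex opsym}

/-- The projection from quasiterms to terms. -/
def tmk : QTerm var varsort index bindex opsym → Term var varsort index bindex opsym :=
  Quot.mk _

/-- The projection from quasiabstractions to abstractions. -/
def amk : QAbs var varsort index bindex opsym → Abstr var varsort index bindex opsym :=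
  Quot.mk _

/-- A representative of a term. -/
noncomputable def trep (X : Term var varsort index bindex opsym) :
    QTerm var varsort index bindex opsym := Quot.out X

/-- A representative of an abstraction. -/
noncomputable def arep (A : Abstr var varsort index bindex opsym) :
    QAbs var varsort index bindex opsym := Quot.out A

/-- Good terms. -/
def good (X : Term var varsort index bindex opsym) : Prop := QGood (trep X)

/-- Good abstractions. -/
def goodAbs (A : Abstr var varsort index bindex opsym) : Prop := QGoodAbs (arep A)

/-- The variable-injection constructor on terms. -/
def Var (xs : varsort) (x : var) : Term var varsort index bindex opsym :=
  tmk (.qVar xs x)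

/-- The operation constructor on terms. -/
noncomputable def Op (d : opsym) (inp : Input index (Term var varsort index bindex opsym))
    (binp : Input bindex (Abstr var varsort index bindex opsym)) :
    Term var varsort index bindex opsym :=
  tmk (.qOp d (liftF trep inp) (liftF arep binp))

/-- The abstraction constructor. -/
noncomputable def Abs (xs : varsort) (x : var) (X : Term var varsort index bindex opsym) :
    Abstr var varsort index bindex opsym :=
  amk (.qAbs xs x (trep X))

/-- Freshness on terms. -/
def fresh (ys : varsort) (y : var) (X : Term var varsort index bindex opsym) : Prop :=
  QFresh ys y (trep X)

/-- Freshness on abstractions. -/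
def freshAbs (ys : varsort) (y : var) (A : Abstr var varsort index bindex opsym) : Prop :=
  QFreshAbs ys y (arep A)

/-- Swapping on terms. -/
noncomputable def tswap (X : Term var varsort index bindex opsym)
    (z1 z2 : var) (zs : varsort) : Term var varsort index bindex opsym :=
  tmk (qSwap z1 z2 zs (trep X))

/-! ### Substitution -/

mutual
/-- The graph of capture-avoiding substitution on quasiterms:
`QSubst X Y y ys Z` means that `Z` is a result of substituting `Y` for the free
occurrences of the variable `y` of varsort `ys` in `X` (along a capture-free
representative). -/
inductive QSubst : QTerm var varsort index bindex opsym →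
    QTerm var varsort index bindex opsym → var → varsort →
    QTerm var varsort index bindex opsym → Prop where
  | var_eq : ∀ {Y y ys}, QSubst (.qVar ys y) Y y ys Y
  | var_ne : ∀ {Y y ys xs x}, (xs, x) ≠ (ys, y) → QSubst (.qVar xs x) Y y ys (.qVar xs x)
  | op : ∀ {Y y ys d inp binp inp' binp'},
      (∀ i, inp i = none ↔ inp' i = none) →
      (∀ i X X', inp i = some X → inp' i = some X' → QSubst X Y y ys X') →
      (∀ j, binp j = none ↔ binp' j = none) →
      (∀ j A A', binp j = some A → binp' j = some A' → QSubstAbs A Y y ys A') →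
      QSubst (.qOp d inp binp) Y y ys (.qOp d inp' binp')
/-- The graph of capture-avoiding substitution on quasiabstractions. -/
inductive QSubstAbs : QAbs var varsort index bindex opsym →
    QTerm var varsort index bindex opsym → var → varsort →
    QAbs var varsort index bindex opsym → Prop where
  | abs : ∀ {Y y ys xs x X X'}, (xs, x) ≠ (ys, y) → QFresh xs x Y →
      QSubst X Y y ys X' → QSubstAbs (.qAbs xs x X) Y y ys (.qAbs xs x X')
end

/-- The graph of capture-avoiding substitution on terms. -/
def SubstRel (X Y : Term var varsort index bindex opsym) (y : var) (ys : varsort)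
    (Z : Term var varsort index bindex opsym) : Prop :=
  ∃ qX qZ, tmk qX = X ∧ tmk qZ = Z ∧ QSubst qX (trep Y) y ys qZ

/-- Capture-avoiding substitution on terms: `subst X Y y ys` is `X[Y/y]_ys`. -/
noncomputable def subst (X Y : Term var varsort index bindex opsym)
    (y : var) (ys : varsort) : Term var varsort index bindex opsym :=
  if h : ∃ Z, SubstRel X Y y ys Z then h.choose else X

/-- The graph of capture-avoiding substitution on abstractions. -/
def SubstAbsRel (A : Abstr var varsort index bindex opsym)
    (Y : Term var varsort index bindex opsym) (y : var) (ys : varsort)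
    (B : Abstr var varsort index bindex opsym) : Prop :=
  ∃ qA qB, amk qA = A ∧ amk qB = B ∧ QSubstAbs qA (trep Y) y ys qB

/-- Capture-avoiding substitution on abstractions: `substAbs A Y y ys` is `A[Y/y]_ys`. -/
noncomputable def substAbs (A : Abstr var varsort index bindex opsym)
    (Y : Term var varsort index bindex opsym) (y : var) (ys : varsort) :
    Abstr var varsort index bindex opsym :=
  if h : ∃ B, SubstAbsRel A Y y ys B then h.choose else A

/-! ### Parallel substitution -/

mutual
/-- The graph of capture-avoiding parallel substitution on quasiterms, along an
assignment `ρ : varsort → var → Option qterm`. -/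
inductive QPSubst : QTerm var varsort index bindex opsym →
    (varsort → var → Option (QTerm var varsort index bindex opsym)) →
    QTerm var varsort index bindex opsym → Prop where
  | var_some : ∀ {ρ xs x Y}, ρ xs x = some Y → QPSubst (.qVar xs x) ρ Y
  | var_none : ∀ {ρ xs x}, ρ xs x = none → QPSubst (.qVar xs x) ρ (.qVar xs x)
  | op : ∀ {ρ d inp binp inp' binp'},
      (∀ i, inp i = none ↔ inp' i = none) →
      (∀ i X X', inp i = some X → inp' i = some X' → QPSubst X ρ X') →
      (∀ j, binp j = none ↔ binp' j = none) →
      (∀ j A A', binp j = some A → binp' j = some A' → QPSubstAbs A ρ A') →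
      QPSubst (.qOp d inp binp) ρ (.qOp d inp' binp')
/-- The graph of capture-avoiding parallel substitution on quasiabstractions. -/
inductive QPSubstAbs : QAbs var varsort index bindex opsym →
    (varsort → var → Option (QTerm var varsort index bindex opsym)) →
    QAbs var varsort index bindex opsym → Prop where
  | abs : ∀ {ρ xs x X X'}, ρ xs x = none →
      (∀ ys y Y, ρ ys y = some Y → QFresh xs x Y) →
      QPSubst X ρ X' → QPSubstAbs (.qAbs xs x X) ρ (.qAbs xs x X')
end

/-- Turning a term-valued assignment into a quasiterm-valued one, by picking
representatives. -/
noncomputable def qassign (ρ : varsort → var → Option (Term var varsort index bindex opsym)) :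
    varsort → var → Option (QTerm var varsort index bindex opsym) :=
  fun xs x => (ρ xs x).map trep

/-- The graph of parallel substitution on terms. -/
def PSubstRel (X : Term var varsort index bindex opsym)
    (ρ : varsort → var → Option (Term var varsort index bindex opsym))
    (Z : Term var varsort index bindex opsym) : Prop :=
  ∃ qX qZ, tmk qX = X ∧ tmk qZ = Z ∧ QPSubst qX (qassign ρ) qZ

/-- Capture-avoiding parallel substitution on terms: `psubst X ρ` is `X[ρ]`. -/
noncomputable def psubst (X : Term var varsort index bindex opsym)
    (ρ : varsort → var → Option (Term var varsort index bindex opsym)) :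
    Term var varsort index bindex opsym :=
  if h : ∃ Z, PSubstRel X ρ Z then h.choose else X

/-- The graph of parallel substitution on abstractions. -/
def PSubstAbsRel (A : Abstr var varsort index bindex opsym)
    (ρ : varsort → var → Option (Term var varsort index bindex opsym))
    (B : Abstr var varsort index bindex opsym) : Prop :=
  ∃ qA qB, amk qA = A ∧ amk qB = B ∧ QPSubstAbs qA (qassign ρ) qB

/-- Capture-avoiding parallel substitution on abstractions. -/
noncomputable def psubstAbs (A : Abstr var varsort index bindex opsym)
    (ρ : varsort → var → Option (Term var varsort index bindex opsym)) :
    Abstr var varsort index bindex opsym :=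
  if h : ∃ B, PSubstAbsRel A ρ B then h.choose else A

variable {var varsort index bindex opsym : Type u}

/-- Map a sorted variable-renaming over a quasiterm. -/
noncomputable def vmap (f : varsort → var → var) :
    QTerm var varsort index bindex opsym → QTerm var varsort index bindex opsym :=
  QTerm.rec (motive_1 := fun _ => QTerm var varsort index bindex opsym)
    (motive_2 := fun _ => QAbs var varsort index bindex opsym)
    (motive_3 := fun _ => Option (QTerm var varsort index bindex opsym))
    (motive_4 := fun _ => Option (QAbs var varsort index bindex opsym))
    (fun xs x => .qVar xs (f xs x))
    (fun d _ _ rinp rbinp => .qOp d rinp rbinp)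
    (fun xs x _ rX => .qAbs xs (f xs x) rX)
    none (fun _ r => some r) none (fun _ r => some r)

noncomputable def vmapAbs (f : varsort → var → var) :
    QAbs var varsort index bindex opsym → QAbs var varsort index bindex opsym
  | .qAbs xs x X => .qAbs xs (f xs x) (vmap f X)

@[simp] theorem vmap_qVar (f : varsort → var → var) (xs : varsort) (x : var) :
    vmap f (.qVar xs x : QTerm var varsort index bindex opsym) = .qVar xs (f xs x) := rfl

@[simp] theorem vmap_qOp (f : varsort → var → var) (d : opsym)
    (inp : index → Option (QTerm var varsort index bindex opsym))
    (binp : bindex → Option (QAbs var varsort index bindex opsym)) :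
    vmap f (.qOp d inp binp) =
      .qOp d (fun i => (inp i).map (vmap f)) (fun j => (binp j).map (vmapAbs f)) := by
  show QTerm.qOp _ _ _ = _
  congr 1
  · funext i; cases inp i <;> rfl
  · funext j; cases h : binp j
    · rfl
    · show some _ = some _
      congr 1
      rename_i A; cases A; rfl

@[simp] theorem vmapAbs_qAbs (f : varsort → var → var) (xs : varsort) (x : var)
    (X : QTerm var varsort index bindex opsym) :
    vmapAbs f (.qAbs xs x X) = .qAbs xs (f xs x) (vmap f X) := rfl

/-- structural induction principle -/
theorem QTerm.my_ind {P : QTerm var varsort index bindex opsym → Prop}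
    {Q : QAbs var varsort index bindex opsym → Prop}
    (hvar : ∀ xs x, P (.qVar xs x))
    (hop : ∀ d inp binp, (∀ i X, inp i = some X → P X) → (∀ j A, binp j = some A → Q A) →
      P (.qOp d inp binp))
    (habs : ∀ xs x X, P X → Q (.qAbs xs x X)) :
    (∀ X, P X) ∧ (∀ A, Q A) := by
  refine ⟨fun X => ?_, fun A => ?_⟩
  · refine QTerm.rec (motive_1 := fun X => P X) (motive_2 := fun A => Q A)
      (motive_3 := fun o => ∀ X, o = some X → P X)
      (motive_4 := fun o => ∀ A, o = some A → Q A)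
      hvar (fun d inp binp ri rb => hop d inp binp (fun i => ri i) (fun j => rb j))
      (fun xs x X hX => habs xs x X hX)
      (fun X h => by cases h) (fun X hX Y h => by cases h; exact hX)
      (fun A h => by cases h) (fun A hA B h => by cases h; exact hA) X
  · refine QAbs.rec (motive_1 := fun X => P X) (motive_2 := fun A => Q A)
      (motive_3 := fun o => ∀ X, o = some X → P X)
      (motive_4 := fun o => ∀ A, o = some A → Q A)
      hvar (fun d inp binp ri rb => hop d inp binp (fun i => ri i) (fun j => rb j))
      (fun xs x X hX => habs xs x X hX)
      (fun X h => by cases h) (fun X hX Y h => by cases h; exact hX)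
      (fun A h => by cases h) (fun A hA B h => by cases h; exact hA) A
theorem vmap_vmap (f g : varsort → var → var) :
    (∀ X : QTerm var varsort index bindex opsym,
      vmap f (vmap g X) = vmap (fun vs v => f vs (g vs v)) X) ∧
    (∀ A : QAbs var varsort index bindex opsym,
      vmapAbs f (vmapAbs g A) = vmapAbs (fun vs v => f vs (g vs v)) A) := by
  refine QTerm.my_ind (fun xs x => rfl) (fun d inp binp hi hb => ?_) (fun xs x X hX => ?_)
  · simp only [vmap_qOp]
    congr 1
    · funext i; cases h : inp i with
      | none => rfl
      | some X => simp [hi i X h]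
    · funext j; cases h : binp j with
      | none => rfl
      | some A => simp [hb j A h]
  · simp [hX]

theorem vmap_id :
    (∀ X : QTerm var varsort index bindex opsym, vmap (fun _ v => v) X = X) ∧
    (∀ A : QAbs var varsort index bindex opsym, vmapAbs (fun _ v => v) A = A) := by
  refine QTerm.my_ind (fun xs x => rfl) (fun d inp binp hi hb => ?_) (fun xs x X hX => ?_)
  · simp only [vmap_qOp]
    congr 1
    · funext i; cases h : inp i with
      | none => rfl
      | some X => simp [hi i X h]
    · funext j; cases h : binp j with
      | none => rfl
      | some A => simp [hb j A h]
  · simp [hX]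

@[simp] theorem qSwap_qVar (z1 z2 : var) (zs xs : varsort) (x : var) :
    qSwap z1 z2 zs (.qVar xs x : QTerm var varsort index bindex opsym) =
      .qVar xs (swapVarS var varsort zs xs z1 z2 x) := rfl

@[simp] theorem qSwap_qOp (z1 z2 : var) (zs : varsort) (d : opsym)
    (inp : index → Option (QTerm var varsort index bindex opsym))
    (binp : bindex → Option (QAbs var varsort index bindex opsym)) :
    qSwap z1 z2 zs (.qOp d inp binp) =
      .qOp d (fun i => (inp i).map (qSwap z1 z2 zs)) (fun j => (binp j).map (qSwapAbs z1 z2 zs)) := by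
  show QTerm.qOp _ _ _ = _
  congr 1
  · funext i; cases inp i <;> rfl
  · funext j; cases h : binp j
    · rfl
    · show some _ = some _
      congr 1
      rename_i A; cases A; rfl

@[simp] theorem qSwapAbs_qAbs (z1 z2 : var) (zs xs : varsort) (x : var)
    (X : QTerm var varsort index bindex opsym) :
    qSwapAbs z1 z2 zs (.qAbs xs x X) =
      .qAbs xs (swapVarS var varsort zs xs z1 z2 x) (qSwap z1 z2 zs X) := rfl

theorem qSwap_eq_vmap (z1 z2 : var) (zs : varsort) :
    (∀ X : QTerm var varsort index bindex opsym,
      qSwap z1 z2 zs X = vmap (fun vs v => swapVarS var varsort zs vs z1 z2 v) X) ∧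
    (∀ A : QAbs var varsort index bindex opsym,
      qSwapAbs z1 z2 zs A = vmapAbs (fun vs v => swapVarS var varsort zs vs z1 z2 v) A) := by
  refine QTerm.my_ind (fun xs x => rfl) (fun d inp binp hi hb => ?_) (fun xs x X hX => ?_)
  · simp only [vmap_qOp, qSwap_qOp]
    have h1 : (fun i => (inp i).map (qSwap z1 z2 zs)) =
        fun i => (inp i).map (vmap (fun vs v => swapVarS var varsort zs vs z1 z2 v)) := by
      funext i; cases h : inp i with
      | none => rfl
      | some X => simp [hi i X h]
    have h2 : (fun j => (binp j).map (qSwapAbs z1 z2 zs)) =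
        fun j => (binp j).map (vmapAbs (fun vs v => swapVarS var varsort zs vs z1 z2 v)) := by
      funext j; cases h : binp j with
      | none => rfl
      | some A => simp [hb j A h]
    rw [h1, h2]
  · simp [hX]

theorem vmap_ext {f g : varsort → var → var} (h : ∀ vs v, f vs v = g vs v)
    {X : QTerm var varsort index bindex opsym} : vmap f X = vmap g X := by
  have : f = g := funext fun vs => funext fun v => h vs v
  rw [this]
/-! Freshness characterizations -/

theorem fresh_qVar_iff {zs : varsort} {z : var} {xs : varsort} {x : var} :
    QFresh zs z (.qVar xs x : QTerm var varsort index bindex opsym) ↔ (zs, z) ≠ (xs, x) := by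
  constructor
  · intro h; cases h; assumption
  · exact fun h => QFresh.qVar h

theorem fresh_qOp_iff {zs : varsort} {z : var} {d : opsym}
    {inp : index → Option (QTerm var varsort index bindex opsym)}
    {binp : bindex → Option (QAbs var varsort index bindex opsym)} :
    QFresh zs z (.qOp d inp binp : QTerm var varsort index bindex opsym) ↔
      (∀ i X, inp i = some X → QFresh zs z X) ∧ (∀ j A, binp j = some A → QFreshAbs zs z A) := by
  constructor
  · intro h; cases h; constructor <;> assumption
  · exact fun ⟨h1, h2⟩ => QFresh.qOp h1 h2

theorem freshAbs_qAbs_iff {zs : varsort} {z : var} {xs : varsort} {x : var}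
    {X : QTerm var varsort index bindex opsym} :
    QFreshAbs zs z (.qAbs xs x X : QAbs var varsort index bindex opsym) ↔
      (zs, z) = (xs, x) ∨ QFresh zs z X := by
  constructor
  · intro h; cases h
    · exact Or.inl rfl
    · exact Or.inr (by assumption)
  · rintro (h | h)
    · injection h with h1 h2
      subst h1; subst h2
      exact QFreshAbs.qAbs_bound
    · exact QFreshAbs.qAbs_body h

/-! Sorted permutations -/

/-- `f` and `g` are mutually inverse sortwise maps on variables. -/
def SPerm (f g : varsort → var → var) : Prop :=
  (∀ vs v, g vs (f vs v) = v) ∧ (∀ vs v, f vs (g vs v) = v)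

theorem SPerm.inj {f g : varsort → var → var} (h : SPerm f g) {vs : varsort} {a b : var}
    (hab : f vs a = f vs b) : a = b := by
  have := congrArg (g vs) hab; rwa [h.1, h.1] at this

theorem SPerm.symm {f g : varsort → var → var} (h : SPerm f g) : SPerm g f := ⟨h.2, h.1⟩

theorem sperm_swap (z1 z2 : var) (zs : varsort) :
    SPerm (fun vs v => swapVarS var varsort zs vs z1 z2 v)
      (fun vs v => swapVarS var varsort zs vs z1 z2 v) := by
  constructor <;>
  · intro vs v
    simp only [swapVarS, swapVar]
    split
    · split <;> split <;> simp_all <;> split <;> simp_all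
    · rfl

theorem sperm_comp {f g f' g' : varsort → var → var} (h : SPerm f g) (h' : SPerm f' g') :
    SPerm (fun vs v => f vs (f' vs v)) (fun vs v => g' vs (g vs v)) :=
  ⟨fun vs v => by simp only []; rw [h.1, h'.1], fun vs v => by simp only []; rw [h'.2, h.2]⟩

theorem sperm_id : SPerm (fun _ v => v) (fun (_ : varsort) (v : var) => v) :=
  ⟨fun _ _ => rfl, fun _ _ => rfl⟩

/-! Freshness and vmap -/

theorem fresh_vmap {f g : varsort → var → var} (hfg : SPerm f g) :
    (∀ X : QTerm var varsort index bindex opsym, ∀ zs z,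
      (QFresh zs z (vmap f X) ↔ QFresh zs (g zs z) X)) ∧
    (∀ A : QAbs var varsort index bindex opsym, ∀ zs z,
      (QFreshAbs zs z (vmapAbs f A) ↔ QFreshAbs zs (g zs z) A)) := by
  refine QTerm.my_ind (fun xs x zs z => ?_) (fun d inp binp hi hb zs z => ?_)
    (fun xs x X hX zs z => ?_)
  · simp only [vmap_qVar, fresh_qVar_iff, ne_eq, Prod.mk.injEq, not_and]
    constructor
    · intro h hz hx
      subst hz
      exact h rfl (hx ▸ (hfg.2 zs z).symm)
    · intro h hz hx
      subst hz
      exact h rfl (by rw [hx, hfg.1])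
  · simp only [vmap_qOp, fresh_qOp_iff]
    constructor
    · rintro ⟨h1, h2⟩
      constructor
      · intro i X hX
        have := h1 i (vmap f X) (by rw [hX]; rfl)
        exact (hi i X hX zs z).mp this
      · intro j A hA
        have := h2 j (vmapAbs f A) (by rw [hA]; rfl)
        exact (hb j A hA zs z).mp this
    · rintro ⟨h1, h2⟩
      constructor
      · intro i W hW
        cases hIX : inp i with
        | none => rw [hIX] at hW; cases hW
        | some X =>
          rw [hIX] at hW
          injection hW with hW
          subst hW
          exact (hi i X hIX zs z).mpr (h1 i X hIX)
      · intro j W hW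
        cases hIA : binp j with
        | none => rw [hIA] at hW; cases hW
        | some A =>
          rw [hIA] at hW
          injection hW with hW
          subst hW
          exact (hb j A hIA zs z).mpr (h2 j A hIA)
  · simp only [vmapAbs_qAbs, freshAbs_qAbs_iff, hX zs z, Prod.mk.injEq]
    constructor
    · rintro (⟨rfl, hz⟩ | h)
      · exact Or.inl ⟨rfl, by rw [hz, hfg.1]⟩
      · exact Or.inr h
    · rintro (⟨rfl, hz⟩ | h)
      · exact Or.inl ⟨rfl, by rw [← hz, hfg.2]⟩
      · exact Or.inr h
/-! Goodness is preserved by variable renaming -/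

theorem good_vmap (f : varsort → var → var) :
    (∀ X : QTerm var varsort index bindex opsym, QGood X → QGood (vmap f X)) ∧
    (∀ A : QAbs var varsort index bindex opsym, QGoodAbs A → QGoodAbs (vmapAbs f A)) := by
  refine QTerm.my_ind (fun xs x _ => QGood.qVar) (fun d inp binp hi hb hg => ?_)
    (fun xs x X hX hg => ?_)
  · cases hg with
    | qOp h1 h2 h3 h4 =>
      rw [vmap_qOp]
      refine QGood.qOp ?_ ?_ ?_ ?_
      · intro i W hW
        cases hIX : inp i with
        | none => rw [hIX] at hW; cases hW
        | some X =>
          rw [hIX] at hW; injection hW with hW; subst hW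
          exact hi i X hIX (h1 i X hIX)
      · intro j W hW
        cases hIA : binp j with
        | none => rw [hIA] at hW; cases hW
        | some A =>
          rw [hIA] at hW; injection hW with hW; subst hW
          exact hb j A hIA (h2 j A hIA)
      · have : idom (fun i => (inp i).map (vmap f)) = idom inp := by
          ext i; simp [idom]
        unfold smallDom; rw [this]; exact h3
      · have : idom (fun j => (binp j).map (vmapAbs f)) = idom binp := by
          ext j; simp [idom]
        unfold smallDom; rw [this]; exact h4
  · cases hg with
    | qAbs h => exact QGoodAbs.qAbs (hX h)

/-! Smallness of the set of non-fresh variables -/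

/-- The set of sorted variables that are not fresh in a quasiterm. -/
def NFree (X : QTerm var varsort index bindex opsym) : Set (varsort × var) :=
  {p | ¬ QFresh p.1 p.2 X}

/-- The set of sorted variables that are not fresh in a quasiabstraction. -/
def NFreeA (A : QAbs var varsort index bindex opsym) : Set (varsort × var) :=
  {p | ¬ QFreshAbs p.1 p.2 A}

theorem small_NF (hreg : (Cardinal.mk var).IsRegular) :
    ∀ {X : QTerm var varsort index bindex opsym}, QGood X →
      Cardinal.mk (NFree X) < Cardinal.mk var := by
  intro X hX
  refine QGood.rec (motive_1 := fun X _ => Cardinal.mk (NFree X) < Cardinal.mk var)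
    (motive_2 := fun A _ => Cardinal.mk (NFreeA A) < Cardinal.mk var)
    (fun {xs x} => ?_) ?_ ?_ hX
  · have hsub : NFree (.qVar xs x : QTerm var varsort index bindex opsym) ⊆ {(xs, x)} := by
      intro p hp
      by_contra hne
      exact hp (QFresh.qVar (by simpa using hne))
    calc Cardinal.mk (NFree (.qVar xs x : QTerm var varsort index bindex opsym))
        ≤ Cardinal.mk ({(xs, x)} : Set (varsort × var)) := Cardinal.mk_le_mk_of_subset hsub
      _ = 1 := Cardinal.mk_singleton _
      _ < Cardinal.aleph0 := Cardinal.one_lt_aleph0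
      _ ≤ Cardinal.mk var := hreg.aleph0_le
  · intro d inp binp h1 h2 h3 h4 ih1 ih2
    classical
    set A : ↥(idom inp) → Set (varsort × var) :=
      fun p => {q | ∃ X, inp p.1 = some X ∧ ¬ QFresh q.1 q.2 X} with hA
    set B : ↥(idom binp) → Set (varsort × var) :=
      fun p => {q | ∃ Z, binp p.1 = some Z ∧ ¬ QFreshAbs q.1 q.2 Z} with hB
    have hsub : NFree (.qOp d inp binp : QTerm var varsort index bindex opsym) ⊆
        (⋃ p, A p) ∪ (⋃ p, B p) := by
      intro q hq
      by_contra hqn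
      simp only [Set.mem_union, Set.mem_iUnion, not_or, not_exists] at hqn
      refine hq (QFresh.qOp (fun i X hIX => ?_) (fun j Z hIZ => ?_))
      · by_contra hf
        have hi' : i ∈ idom inp := by simp [idom, hIX]
        exact (not_exists.mp (hqn.1 ⟨i, hi'⟩)) X (by exact ⟨hIX, hf⟩)
      · by_contra hf
        have hj' : j ∈ idom binp := by simp [idom, hIZ]
        exact (not_exists.mp (hqn.2 ⟨j, hj'⟩)) Z (by exact ⟨hIZ, hf⟩)
    have hAlt : ∀ p, Cardinal.mk (A p) < Cardinal.mk var := by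
      rintro ⟨i, hi⟩
      cases hIX : inp i with
      | none => exact absurd hIX hi
      | some X =>
        have : A ⟨i, hi⟩ = NFree X := by
          ext q
          simp only [hA, NFree, Set.mem_setOf_eq]
          constructor
          · rintro ⟨X', hX', hf⟩
            rw [hIX] at hX'; injection hX' with hX'; subst hX'; exact hf
          · intro hf; exact ⟨X, hIX, hf⟩
        rw [this]
        exact ih1 i X hIX
    have hBlt : ∀ p, Cardinal.mk (B p) < Cardinal.mk var := by
      rintro ⟨j, hj⟩
      cases hIZ : binp j with
      | none => exact absurd hIZ hj
      | some Z =>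
        have : B ⟨j, hj⟩ = NFreeA Z := by
          ext q
          simp only [hB, NFreeA, Set.mem_setOf_eq]
          constructor
          · rintro ⟨Z', hZ', hf⟩
            rw [hIZ] at hZ'; injection hZ' with hZ'; subst hZ'; exact hf
          · intro hf; exact ⟨Z, hIZ, hf⟩
        rw [this]
        exact ih2 j Z hIZ
    have hU1 : Cardinal.mk (⋃ p, A p) < Cardinal.mk var := by
      refine lt_of_le_of_lt (Cardinal.mk_iUnion_le A) ?_
      exact Cardinal.mul_lt_of_lt hreg.aleph0_le h3
        (Cardinal.iSup_lt_of_isRegular hreg h3 hAlt)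
    have hU2 : Cardinal.mk (⋃ p, B p) < Cardinal.mk var := by
      refine lt_of_le_of_lt (Cardinal.mk_iUnion_le B) ?_
      exact Cardinal.mul_lt_of_lt hreg.aleph0_le h4
        (Cardinal.iSup_lt_of_isRegular hreg h4 hBlt)
    calc Cardinal.mk (NFree (.qOp d inp binp : QTerm var varsort index bindex opsym))
        ≤ Cardinal.mk (((⋃ p, A p) ∪ (⋃ p, B p) : Set (varsort × var))) :=
          Cardinal.mk_le_mk_of_subset hsub
      _ ≤ Cardinal.mk (⋃ p, A p) + Cardinal.mk (⋃ p, B p) := Cardinal.mk_union_le _ _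
      _ < Cardinal.mk var := Cardinal.add_lt_of_lt hreg.aleph0_le hU1 hU2
  · intro xs x X hg ih
    have hsub : NFreeA (.qAbs xs x X : QAbs var varsort index bindex opsym) ⊆ NFree X := by
      intro p hp
      by_contra hf
      simp only [NFree, Set.mem_setOf_eq, not_not] at hf
      exact hp (QFreshAbs.qAbs_body hf)
    exact lt_of_le_of_lt (Cardinal.mk_le_mk_of_subset hsub) ih

theorem small_NFA (hreg : (Cardinal.mk var).IsRegular)
    {A : QAbs var varsort index bindex opsym} (hA : QGoodAbs A) :
    Cardinal.mk (NFreeA A) < Cardinal.mk var := by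
  cases hA with
  | qAbs h =>
    rename_i xs x X
    have hsub : NFreeA (.qAbs xs x X : QAbs var varsort index bindex opsym) ⊆ NFree X := by
      intro p hp
      by_contra hf
      simp only [NFree, Set.mem_setOf_eq, not_not] at hf
      exact hp (QFreshAbs.qAbs_body hf)
    exact lt_of_le_of_lt (Cardinal.mk_le_mk_of_subset hsub) (small_NF hreg h)

/-- The set of variables of a given sort that are not fresh in a good term is small. -/
theorem small_nonfresh (hreg : (Cardinal.mk var).IsRegular)
    {X : QTerm var varsort index bindex opsym} (hX : QGood X) (xs : varsort) :
    Cardinal.mk {z : var | ¬ QFresh xs z X} < Cardinal.mk var := by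
  refine lt_of_le_of_lt (Cardinal.mk_le_of_injective
    (f := fun z : {z : var | ¬ QFresh xs z X} => (⟨(xs, z.1), z.2⟩ : NFree X)) ?_)
    (small_NF hreg hX)
  rintro ⟨a, ha⟩ ⟨b, hb⟩ h
  simpa using congrArg (fun q : NFree X => q.1.2) h

theorem exists_avoid {S : Set var} (hS : Cardinal.mk S < Cardinal.mk var) : ∃ z : var, z ∉ S := by
  by_contra h
  push_neg at h
  have : S = Set.univ := Set.eq_univ_of_forall h
  rw [this, Cardinal.mk_univ] at hS
  exact lt_irrefl _ hS
@[simp] theorem swapVar_left (a b : var) : swapVar var a b a = b := by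
  simp [swapVar]

@[simp] theorem swapVar_right (a b : var) : swapVar var a b b = a := by
  unfold swapVar
  split <;> simp_all

theorem swapVar_other {a b x : var} (h1 : x ≠ a) (h2 : x ≠ b) : swapVar var a b x = x := by
  simp [swapVar, h1, h2]

@[simp] theorem swapVarS_same (zs : varsort) (a b x : var) :
    swapVarS var varsort zs zs a b x = swapVar var a b x := by
  simp [swapVarS]

theorem swapVarS_ne {zs xs : varsort} (h : xs ≠ zs) (a b x : var) :
    swapVarS var varsort zs xs a b x = x := by
  simp [swapVarS, h]

theorem swapVarS_invol (zs xs : varsort) (a b x : var) :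
    swapVarS var varsort zs xs a b (swapVarS var varsort zs xs a b x) = x := by
  by_cases h : xs = zs
  · subst h
    simp only [swapVarS_same]
    unfold swapVar
    split <;> split <;> simp_all <;> split <;> simp_all
  · rw [swapVarS_ne h, swapVarS_ne h]

theorem fresh_qSwap {z1 z2 : var} {us : varsort} {X : QTerm var varsort index bindex opsym}
    {zs : varsort} {z : var} :
    QFresh zs z (qSwap z1 z2 us X) ↔ QFresh zs (swapVarS var varsort us zs z1 z2 z) X := by
  rw [(qSwap_eq_vmap z1 z2 us).1 X]
  exact (fresh_vmap (sperm_swap z1 z2 us)).1 X zs z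

theorem freshAbs_of_alpha_body {xs : varsort} {x x' u : var}
    {X X' : QTerm var varsort index bindex opsym}
    (hu : u ∉ ({x, x'} : Set var)) (hfu : QFresh xs u X) (hfu' : QFresh xs u X')
    (ih : ∀ zs z, QFresh zs z (qSwap u x xs X) ↔ QFresh zs z (qSwap u x' xs X')) :
    ∀ zs z, QFreshAbs zs z (.qAbs xs x X : QAbs var varsort index bindex opsym) ↔
      QFreshAbs zs z (.qAbs xs x' X' : QAbs var varsort index bindex opsym) := by
  intro zs z
  simp only [freshAbs_qAbs_iff, Prod.mk.injEq]
  simp only [Set.mem_insert_iff, Set.mem_singleton_iff, not_or] at hu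
  obtain ⟨hux, hux'⟩ := hu
  have key : ∀ w, QFresh xs (swapVar var u x w) X ↔ QFresh xs (swapVar var u x' w) X' := by
    intro w
    have h1 := (fresh_qSwap (z1 := u) (z2 := x) (us := xs) (X := X) (zs := xs) (z := w))
    have h2 := (fresh_qSwap (z1 := u) (z2 := x') (us := xs) (X := X') (zs := xs) (z := w))
    rw [swapVarS_same] at h1 h2
    exact (h1.symm.trans (ih xs w)).trans h2
  by_cases hzs : zs = xs
  · subst hzs
    by_cases hzu : z = u
    · subst hzu
      exact ⟨fun _ => Or.inr hfu', fun _ => Or.inr hfu⟩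
    · by_cases hzx : z = x
      · subst hzx
        constructor
        · intro _
          by_cases hxx' : z = x'
          · exact Or.inl ⟨rfl, hxx'⟩
          · have := key z
            rw [swapVar_right, swapVar_other hzu hxx'] at this
            exact Or.inr (this.mp hfu)
        · intro _; exact Or.inl ⟨rfl, rfl⟩
      · by_cases hzx' : z = x'
        · subst hzx'
          constructor
          · intro _; exact Or.inl ⟨rfl, rfl⟩
          · intro _
            have := key z
            rw [swapVar_other hzu hzx, swapVar_right] at this
            exact Or.inr (this.mpr hfu')
        · have := key z
          rw [swapVar_other hzu hzx, swapVar_other hzu hzx'] at this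
          constructor
          · rintro (⟨_, hzx0⟩ | hf)
            · exact absurd hzx0 hzx
            · exact Or.inr (this.mp hf)
          · rintro (⟨_, hzx0⟩ | hf)
            · exact absurd hzx0 hzx'
            · exact Or.inr (this.mpr hf)
  · have h1 := (fresh_qSwap (z1 := u) (z2 := x) (us := xs) (X := X) (zs := zs) (z := z))
    have h2 := (fresh_qSwap (z1 := u) (z2 := x') (us := xs) (X := X') (zs := zs) (z := z))
    rw [swapVarS_ne fun h => hzs h] at h1 h2
    have := (h1.symm.trans (ih zs z)).trans h2
    constructor
    · rintro (⟨hz, _⟩ | hf)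
      · exact absurd hz hzs
      · exact Or.inr (this.mp hf)
    · rintro (⟨hz, _⟩ | hf)
      · exact absurd hz hzs
      · exact Or.inr (this.mpr hf)

theorem alpha_fresh {X Y : QTerm var varsort index bindex opsym} (h : Alpha X Y) :
    ∀ zs z, (QFresh zs z X ↔ QFresh zs z Y) := by
  refine Alpha.rec (motive_1 := fun X Y _ => ∀ zs z, QFresh zs z X ↔ QFresh zs z Y)
    (motive_2 := fun A B _ => ∀ zs z, QFreshAbs zs z A ↔ QFreshAbs zs z B)
    (fun {xs x} zs z => Iff.rfl) ?_ ?_ h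
  · intro d inp binp inp' binp' hd1 _ hd2 _ ih1 ih2 zs z
    simp only [fresh_qOp_iff]
    constructor
    · rintro ⟨h1, h2⟩
      refine ⟨fun i X' hX' => ?_, fun j A' hA' => ?_⟩
      · cases hIX : inp i with
        | none => exact absurd hX' (by rw [(hd1 i).mp hIX]; simp)
        | some X => exact (ih1 i X X' hIX hX' zs z).mp (h1 i X hIX)
      · cases hIA : binp j with
        | none => exact absurd hA' (by rw [(hd2 j).mp hIA]; simp)
        | some A => exact (ih2 j A A' hIA hA' zs z).mp (h2 j A hIA)
    · rintro ⟨h1, h2⟩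
      refine ⟨fun i X hX => ?_, fun j A hA => ?_⟩
      · cases hIX : inp' i with
        | none => exact absurd hX (by rw [(hd1 i).mpr hIX]; simp)
        | some X' => exact (ih1 i X X' hX hIX zs z).mpr (h1 i X' hIX)
      · cases hIA : binp' j with
        | none => exact absurd hA (by rw [(hd2 j).mpr hIA]; simp)
        | some A' => exact (ih2 j A A' hA hIA zs z).mpr (h2 j A' hIA)
  · intro xs x x' X X' u hu hfu hfu' _ ih
    exact freshAbs_of_alpha_body hu hfu hfu' ih

theorem alphaAbs_fresh {A B : QAbs var varsort index bindex opsym} (h : AlphaAbs A B) :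
    ∀ zs z, (QFreshAbs zs z A ↔ QFreshAbs zs z B) := by
  cases h with
  | qAbs hu hfu hfu' ha =>
    exact freshAbs_of_alpha_body hu hfu hfu' (alpha_fresh ha)

theorem eqvgen_fresh {X Y : QTerm var varsort index bindex opsym}
    (h : Relation.EqvGen (@Alpha var varsort index bindex opsym) X Y) :
    ∀ zs z, (QFresh zs z X ↔ QFresh zs z Y) := by
  induction h with
  | rel _ _ hxy => exact alpha_fresh hxy
  | refl _ => exact fun _ _ => Iff.rfl
  | symm _ _ _ ih => exact fun zs z => (ih zs z).symm
  | trans _ _ _ _ _ ih1 ih2 => exact fun zs z => (ih1 zs z).trans (ih2 zs z)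
theorem exists_fresh3 (hreg : (Cardinal.mk var).IsRegular) (xs : varsort) (a b : var)
    {T1 T2 : QTerm var varsort index bindex opsym} (h1 : QGood T1) (h2 : QGood T2) :
    ∃ w : var, w ≠ a ∧ w ≠ b ∧ QFresh xs w T1 ∧ QFresh xs w T2 := by
  have hsmall : Cardinal.mk (↥(({a, b} : Set var) ∪
      ({z : var | ¬ QFresh xs z T1} ∪ {z : var | ¬ QFresh xs z T2}))) < Cardinal.mk var := by
    refine lt_of_le_of_lt (Cardinal.mk_union_le _ _) (Cardinal.add_lt_of_lt hreg.aleph0_le ?_ ?_)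
    · exact lt_of_lt_of_le (((Set.finite_singleton b).insert a).lt_aleph0)
        hreg.aleph0_le
    · exact lt_of_le_of_lt (Cardinal.mk_union_le _ _)
        (Cardinal.add_lt_of_lt hreg.aleph0_le (small_nonfresh hreg h1 xs)
          (small_nonfresh hreg h2 xs))
  obtain ⟨w, hw⟩ := exists_avoid hsmall
  simp only [Set.mem_union, Set.mem_insert_iff, Set.mem_singleton_iff, Set.mem_setOf_eq,
    not_or, not_not] at hw
  exact ⟨w, hw.1.1, hw.1.2, hw.2.1, hw.2.2⟩

theorem nonfresh_vmap {f g : varsort → var → var} (hp : SPerm f g)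
    {X : QTerm var varsort index bindex opsym} {vs : varsort} {v : var}
    (h : ¬ QFresh vs v X) : ¬ QFresh vs (f vs v) (vmap f X) := by
  intro hf
  have := ((fresh_vmap hp).1 X vs (f vs v)).mp hf
  rw [hp.1] at this
  exact h this

/-- The key lemma: renaming along sorted permutations that agree on the non-fresh
variables preserves alpha-equivalence. -/
theorem alpha_vmap (hreg : (Cardinal.mk var).IsRegular) :
    ∀ {X Y : QTerm var varsort index bindex opsym}, Alpha X Y → QGood X → QGood Y →
      ∀ {f₁ g₁ f₂ g₂ : varsort → var → var}, SPerm f₁ g₁ → SPerm f₂ g₂ →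
        (∀ vs v, ¬ QFresh vs v X → f₁ vs v = f₂ vs v) → Alpha (vmap f₁ X) (vmap f₂ Y) := by
  intro X Y h
  refine Alpha.rec
    (motive_1 := fun X Y _ => QGood X → QGood Y →
      ∀ {f₁ g₁ f₂ g₂ : varsort → var → var}, SPerm f₁ g₁ → SPerm f₂ g₂ →
        (∀ vs v, ¬ QFresh vs v X → f₁ vs v = f₂ vs v) → Alpha (vmap f₁ X) (vmap f₂ Y))
    (motive_2 := fun A B _ => QGoodAbs A → QGoodAbs B →
      ∀ {f₁ g₁ f₂ g₂ : varsort → var → var}, SPerm f₁ g₁ → SPerm f₂ g₂ →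
        (∀ vs v, ¬ QFreshAbs vs v A → f₁ vs v = f₂ vs v) → AlphaAbs (vmapAbs f₁ A) (vmapAbs f₂ B))
    ?_ ?_ ?_ h
  · intro xs x _ _ f₁ g₁ f₂ g₂ _ _ hagree
    have hx : ¬ QFresh xs x (.qVar xs x : QTerm var varsort index bindex opsym) := by
      rw [fresh_qVar_iff]; simp
    rw [vmap_qVar, vmap_qVar, hagree xs x hx]
    exact Alpha.qVar
  · intro d inp binp inp' binp' hd1 ha1 hd2 ha2 ih1 ih2 hgX hgY f₁ g₁ f₂ g₂ hp1 hp2 hagree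
    cases hgX with
    | qOp hg1 hg2 _ _ =>
    cases hgY with
    | qOp hg1' hg2' _ _ =>
    rw [vmap_qOp, vmap_qOp]
    refine Alpha.qOp ?_ ?_ ?_ ?_
    · intro i
      simp only [Option.map_eq_none_iff]
      exact hd1 i
    · intro i W W' hW hW'
      cases hIX : inp i with
      | none => exact absurd hW (by rw [hIX]; simp)
      | some X =>
      cases hIX' : inp' i with
      | none => exact absurd hW' (by rw [hIX']; simp)
      | some X' =>
      rw [hIX] at hW; rw [hIX'] at hW'
      simp only [Option.map_some] at hW hW'
      injection hW with hW; injection hW' with hW'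
      subst hW; subst hW'
      refine ih1 i X X' hIX hIX' (hg1 i X hIX) (hg1' i X' hIX') hp1 hp2 ?_
      intro vs v hf
      refine hagree vs v (fun hfo => hf ?_)
      rw [fresh_qOp_iff] at hfo
      exact hfo.1 i X hIX
    · intro j
      simp only [Option.map_eq_none_iff]
      exact hd2 j
    · intro j W W' hW hW'
      cases hIA : binp j with
      | none => exact absurd hW (by rw [hIA]; simp)
      | some A =>
      cases hIA' : binp' j with
      | none => exact absurd hW' (by rw [hIA']; simp)
      | some A' =>
      rw [hIA] at hW; rw [hIA'] at hW'
      simp only [Option.map_some] at hW hW'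
      injection hW with hW; injection hW' with hW'
      subst hW; subst hW'
      refine ih2 j A A' hIA hIA' (hg2 j A hIA) (hg2' j A' hIA') hp1 hp2 ?_
      intro vs v hf
      refine hagree vs v (fun hfo => hf ?_)
      rw [fresh_qOp_iff] at hfo
      exact hfo.2 j A hIA
  · intro xs x x' X₀ Y₀ u hu hfu hfu' ha ih hgA hgB f₁ g₁ f₂ g₂ hp1 hp2 hagree
    simp only [Set.mem_insert_iff, Set.mem_singleton_iff, not_or] at hu
    obtain ⟨hux, hux'⟩ := hu
    cases hgA with
    | qAbs hgX₀ =>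
    cases hgB with
    | qAbs hgY₀ =>
    rw [vmapAbs_qAbs, vmapAbs_qAbs]
    have hgf1 : QGood (vmap f₁ X₀) := (good_vmap f₁).1 X₀ hgX₀
    have hgf2 : QGood (vmap f₂ Y₀) := (good_vmap f₂).1 Y₀ hgY₀
    obtain ⟨w, hwa, hwb, hw1, hw2⟩ :=
      exists_fresh3 hreg xs (f₁ xs x) (f₂ xs x') hgf1 hgf2
    refine AlphaAbs.qAbs (y := w) (by simp [hwa, hwb]) hw1 hw2 ?_
    set F₁ : varsort → var → var :=
      fun vs v => swapVarS var varsort xs vs w (f₁ xs x)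
        (f₁ vs (swapVarS var varsort xs vs u x v)) with hF₁
    set F₂ : varsort → var → var :=
      fun vs v => swapVarS var varsort xs vs w (f₂ xs x')
        (f₂ vs (swapVarS var varsort xs vs u x' v)) with hF₂
    have hP₁ : SPerm F₁ (fun vs v => swapVarS var varsort xs vs u x
        (g₁ vs (swapVarS var varsort xs vs w (f₁ xs x) v))) := by
      rw [hF₁]
      have h1 := sperm_comp (sperm_swap w (f₁ xs x) xs) hp1
      have h2 := sperm_comp h1 (sperm_swap u x xs)
      exact h2
    have hP₂ : SPerm F₂ (fun vs v => swapVarS var varsort xs vs u x'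
        (g₂ vs (swapVarS var varsort xs vs w (f₂ xs x') v))) := by
      rw [hF₂]
      have h1 := sperm_comp (sperm_swap w (f₂ xs x') xs) hp2
      have h2 := sperm_comp h1 (sperm_swap u x' xs)
      exact h2
    have hgood1 : QGood (qSwap u x xs X₀) := by
      rw [(qSwap_eq_vmap u x xs).1]
      exact (good_vmap _).1 X₀ hgX₀
    have hgood2 : QGood (qSwap u x' xs Y₀) := by
      rw [(qSwap_eq_vmap u x' xs).1]
      exact (good_vmap _).1 Y₀ hgY₀
    have hagree' : ∀ vs v, ¬ QFresh vs v (qSwap u x xs X₀) → F₁ vs v = F₂ vs v := by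
      intro vs c hc
      have hcX : ¬ QFresh vs (swapVarS var varsort xs vs u x c) X₀ :=
        fun hf => hc (fresh_qSwap.mpr hf)
      have hcY : ¬ QFresh vs (swapVarS var varsort xs vs u x' c) Y₀ := by
        intro hf
        exact hc ((alpha_fresh ha vs c).mpr (fresh_qSwap.mpr hf))
      by_cases hvs : vs = xs
      · subst hvs
        simp only [hF₁, hF₂]
        simp only [swapVarS_same] at hcX hcY ⊢
        by_cases hcu : c = u
        · subst hcu
          simp only [swapVar_left, swapVar_right]
        · by_cases hcx : c = x
          · exfalso
            subst hcx
            rw [swapVar_right] at hcX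
            exact hcX hfu
          · by_cases hcx' : c = x'
            · exfalso
              subst hcx'
              rw [swapVar_right] at hcY
              exact hcY hfu'
            · rw [swapVar_other hcu hcx] at hcX
              rw [swapVar_other hcu hcx'] at hcY
              rw [swapVar_other hcu hcx, swapVar_other hcu hcx']
              have hnabs : ¬ QFreshAbs vs c
                  (.qAbs vs x X₀ : QAbs var varsort index bindex opsym) := by
                rw [freshAbs_qAbs_iff]
                push_neg
                exact ⟨by simp [hcx], hcX⟩
              have hag := hagree vs c hnabs
              have hne1w : f₁ vs c ≠ w := by
                intro hdw
                exact (hdw ▸ nonfresh_vmap hp1 hcX) hw1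
              have hne1x : f₁ vs c ≠ f₁ vs x := fun hh => hcx (hp1.inj hh)
              have hne2w : f₂ vs c ≠ w := by
                intro hdw
                exact (hdw ▸ nonfresh_vmap hp2 hcY) hw2
              have hne2x : f₂ vs c ≠ f₂ vs x' := fun hh => hcx' (hp2.inj hh)
              rw [swapVar_other hne1w hne1x, swapVar_other hne2w hne2x]
              exact hag
      · simp only [hF₁, hF₂]
        rw [swapVarS_ne hvs, swapVarS_ne hvs, swapVarS_ne hvs, swapVarS_ne hvs]
        rw [swapVarS_ne hvs] at hcX
        refine hagree vs c ?_
        rw [freshAbs_qAbs_iff]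
        push_neg
        exact ⟨by simp [Prod.ext_iff, hvs], hcX⟩
    have key := ih hgood1 hgood2 hP₁ hP₂ hagree'
    have e1 : vmap F₁ (qSwap u x xs X₀) = qSwap w (f₁ xs x) xs (vmap f₁ X₀) := by
      rw [(qSwap_eq_vmap u x xs).1, (qSwap_eq_vmap w (f₁ xs x) xs).1,
        (vmap_vmap _ _).1, (vmap_vmap _ _).1]
      refine vmap_ext (fun vs v => ?_)
      simp only [hF₁]
      rw [swapVarS_invol]
    have e2 : vmap F₂ (qSwap u x' xs Y₀) = qSwap w (f₂ xs x') xs (vmap f₂ Y₀) := by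
      rw [(qSwap_eq_vmap u x' xs).1, (qSwap_eq_vmap w (f₂ xs x') xs).1,
        (vmap_vmap _ _).1, (vmap_vmap _ _).1]
      refine vmap_ext (fun vs v => ?_)
      simp only [hF₂]
      rw [swapVarS_invol]
    rw [e1, e2] at key
    exact key
theorem qsubst_fresh {X Y : QTerm var varsort index bindex opsym} {y : var} {ys : varsort}
    {Z : QTerm var varsort index bindex opsym} (h : QSubst X Y y ys Z) :
    ∀ zs z, QFresh zs z Z ↔
      (((zs, z) = (ys, y) ∨ QFresh zs z X) ∧ (QFresh ys y X ∨ QFresh zs z Y)) := by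
  refine QSubst.rec
    (motive_1 := fun X Y y ys Z _ => ∀ zs z, QFresh zs z Z ↔
      (((zs, z) = (ys, y) ∨ QFresh zs z X) ∧ (QFresh ys y X ∨ QFresh zs z Y)))
    (motive_2 := fun A Y y ys B _ => ∀ zs z, QFreshAbs zs z B ↔
      (((zs, z) = (ys, y) ∨ QFreshAbs zs z A) ∧ (QFreshAbs ys y A ∨ QFresh zs z Y)))
    ?_ ?_ ?_ ?_ h
  · intro Y y ys zs z
    simp only [fresh_qVar_iff]
    constructor
    · intro hf
      exact ⟨Classical.em _ |>.elim Or.inl (fun h => Or.inr h), Or.inr hf⟩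
    · rintro ⟨h1, h2⟩
      rcases h2 with h2 | h2
      · exact absurd rfl h2
      · exact h2
  · intro Y y ys xs x hne zs z
    simp only [fresh_qVar_iff]
    constructor
    · intro hf
      exact ⟨Or.inr hf, Or.inl (Ne.symm hne)⟩
    · rintro ⟨h1, _⟩
      rcases h1 with h1 | h1
      · exact h1 ▸ (Ne.symm hne)
      · exact h1
  · intro Y y ys d inp binp inp' binp' hd1 hs1 hd2 hs2 ih1 ih2 zs z
    simp only [fresh_qOp_iff]
    constructor
    · rintro ⟨hZ1, hZ2⟩
      constructor
      · by_cases he : (zs, z) = (ys, y)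
        · exact Or.inl he
        · refine Or.inr ⟨fun i X0 hIX => ?_, fun j A0 hIA => ?_⟩
          · cases hIX' : inp' i with
            | none => exact absurd ((hd1 i).mpr hIX') (by rw [hIX]; simp)
            | some X' =>
              have := (ih1 i X0 X' hIX hIX' zs z).mp (hZ1 i X' hIX')
              exact this.1.resolve_left he
          · cases hIA' : binp' j with
            | none => exact absurd ((hd2 j).mpr hIA') (by rw [hIA]; simp)
            | some A' =>
              have := (ih2 j A0 A' hIA hIA' zs z).mp (hZ2 j A' hIA')
              exact this.1.resolve_left he
      · by_cases hc : QFresh zs z Y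
        · exact Or.inr hc
        · refine Or.inl ⟨fun i X0 hIX => ?_, fun j A0 hIA => ?_⟩
          · cases hIX' : inp' i with
            | none => exact absurd ((hd1 i).mpr hIX') (by rw [hIX]; simp)
            | some X' =>
              have := (ih1 i X0 X' hIX hIX' zs z).mp (hZ1 i X' hIX')
              exact this.2.resolve_right hc
          · cases hIA' : binp' j with
            | none => exact absurd ((hd2 j).mpr hIA') (by rw [hIA]; simp)
            | some A' =>
              have := (ih2 j A0 A' hIA hIA' zs z).mp (hZ2 j A' hIA')
              exact this.2.resolve_right hc
    · rintro ⟨h1, h2⟩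
      refine ⟨fun i X' hIX' => ?_, fun j A' hIA' => ?_⟩
      · cases hIX : inp i with
        | none => exact absurd ((hd1 i).mp hIX) (by rw [hIX']; simp)
        | some X0 =>
          refine (ih1 i X0 X' hIX hIX' zs z).mpr ⟨?_, ?_⟩
          · rcases h1 with h1 | h1
            · exact Or.inl h1
            · exact Or.inr (h1.1 i X0 hIX)
          · rcases h2 with h2 | h2
            · exact Or.inl (h2.1 i X0 hIX)
            · exact Or.inr h2
      · cases hIA : binp j with
        | none => exact absurd ((hd2 j).mp hIA) (by rw [hIA']; simp)
        | some A0 =>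
          refine (ih2 j A0 A' hIA hIA' zs z).mpr ⟨?_, ?_⟩
          · rcases h1 with h1 | h1
            · exact Or.inl h1
            · exact Or.inr (h1.2 j A0 hIA)
          · rcases h2 with h2 | h2
            · exact Or.inl (h2.2 j A0 hIA)
            · exact Or.inr h2
  · intro Y y ys xs x X X' hne hfY _ ih zs z
    simp only [freshAbs_qAbs_iff]
    have hyx : ¬ ((ys, y) = (xs, x)) := fun h => hne h.symm
    by_cases hb : (zs, z) = (xs, x)
    · constructor
      · intro _
        refine ⟨Or.inr (Or.inl hb), Or.inr ?_⟩
        injection hb with e1 e2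
        subst e1; subst e2
        exact hfY
      · intro _
        exact Or.inl hb
    · have := ih zs z
      constructor
      · intro hf
        rcases hf with hf | hf
        · exact absurd hf hb
        · obtain ⟨h1, h2⟩ := this.mp hf
          refine ⟨h1.imp id Or.inr, ?_⟩
          rcases h2 with h2 | h2
          · exact Or.inl (Or.inr h2)
          · exact Or.inr h2
      · rintro ⟨h1, h2⟩
        refine Or.inr (this.mpr ⟨?_, ?_⟩)
        · rcases h1 with h1 | h1
          · exact Or.inl h1
          · rcases h1 with h1 | h1
            · exact absurd h1 hb
            · exact Or.inr h1
        · rcases h2 with h2 | h2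
          · rcases h2 with h2 | h2
            · exact absurd h2 hyx
            · exact Or.inl h2
          · exact Or.inr h2
/-- The abstraction step for the existence of capture-avoiding substitution. -/
theorem abs_step (hreg : (Cardinal.mk var).IsRegular)
    {qY : QTerm var varsort index bindex opsym} (hgY : QGood qY) (y : var) (ys : varsort)
    {xs : varsort} {x : var} {X₀ : QTerm var varsort index bindex opsym} (hgX₀ : QGood X₀)
    (ihX₀ : ∀ f g : varsort → var → var, SPerm f g →
      ∃ X' Z, QGood X' ∧ Alpha (vmap f X₀) X' ∧ QSubst X' qY y ys Z) :
    ∀ f g : varsort → var → var, SPerm f g →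
      ∃ A' B, QGoodAbs A' ∧ AlphaAbs (vmapAbs f (.qAbs xs x X₀)) A' ∧
        QSubstAbs A' qY y ys B := by
  intro f g hp
  have hgV : QGood (vmap f X₀) := (good_vmap f).1 X₀ hgX₀
  obtain ⟨z, hza, hzy, hzV, hzY⟩ := exists_fresh3 hreg xs (f xs x) y hgV hgY
  have hp₁ : SPerm (fun vs v => swapVarS var varsort xs vs z (f xs x) (f vs v))
      (fun vs v => g vs (swapVarS var varsort xs vs z (f xs x) v)) :=
    sperm_comp (sperm_swap z (f xs x) xs) hp
  obtain ⟨X', Z, hgX', hal, hsub⟩ := ihX₀ _ _ hp₁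
  obtain ⟨w, hwa, hwz, hwV, hwX'⟩ := exists_fresh3 hreg xs (f xs x) z hgV hgX'
  refine ⟨.qAbs xs z X', .qAbs xs z Z, QGoodAbs.qAbs hgX', ?_, ?_⟩
  · rw [vmapAbs_qAbs]
    refine AlphaAbs.qAbs (y := w) (by simp [hwa, hwz]) hwV hwX' ?_
    -- body condition : Alpha (qSwap w (f xs x) xs (vmap f X₀)) (qSwap w z xs X')
    have e0 : vmap (fun vs v => swapVarS var varsort xs vs z (f xs x) (f vs v)) X₀ =
        qSwap z (f xs x) xs (vmap f X₀) := by
      rw [(qSwap_eq_vmap z (f xs x) xs).1, (vmap_vmap _ _).1]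
    have hgswap : QGood (vmap (fun vs v =>
        swapVarS var varsort xs vs z (f xs x) (f vs v)) X₀) := (good_vmap _).1 X₀ hgX₀
    -- use alpha_vmap on hal
    have key := alpha_vmap hreg hal hgswap hgX'
      (f₁ := fun vs v => swapVarS var varsort xs vs w (f xs x)
        (swapVarS var varsort xs vs z (f xs x) v))
      (g₁ := fun vs v => swapVarS var varsort xs vs z (f xs x)
        (swapVarS var varsort xs vs w (f xs x) v))
      (f₂ := fun vs v => swapVarS var varsort xs vs w z v)
      (g₂ := fun vs v => swapVarS var varsort xs vs w z v)
      (sperm_comp (sperm_swap w (f xs x) xs) (sperm_swap z (f xs x) xs))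
      (sperm_swap w z xs) ?_
    · -- rewrite both sides of key
      have e1 : vmap (fun vs v => swapVarS var varsort xs vs w (f xs x)
          (swapVarS var varsort xs vs z (f xs x) v))
          (vmap (fun vs v => swapVarS var varsort xs vs z (f xs x) (f vs v)) X₀) =
          qSwap w (f xs x) xs (vmap f X₀) := by
        rw [(vmap_vmap _ _).1, (qSwap_eq_vmap w (f xs x) xs).1, (vmap_vmap _ _).1]
        refine vmap_ext (fun vs v => ?_)
        beta_reduce
        rw [swapVarS_invol]
      have e2 : vmap (fun vs v => swapVarS var varsort xs vs w z v) X' =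
          qSwap w z xs X' := by
        rw [(qSwap_eq_vmap w z xs).1]
      rw [e1, e2] at key
      exact key
    · -- agreement on non-fresh variables of (vmap f₁ X₀) = qSwap z (f xs x) xs (vmap f X₀)
      intro vs c hc
      rw [e0] at hc
      have hcV : ¬ QFresh vs (swapVarS var varsort xs vs z (f xs x) c) (vmap f X₀) :=
        fun hf => hc (fresh_qSwap.mpr hf)
      by_cases hvs : xs = vs
      · subst hvs
        simp only [swapVarS_same] at hcV ⊢
        by_cases hcz : c = z
        · subst hcz
          simp only [swapVar_left, swapVar_right]
        · by_cases hca : c = f xs x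
          · exfalso
            subst hca
            rw [swapVar_right] at hcV
            exact hcV hzV
          · have hcw : c ≠ w := by
              intro hcw
              rw [swapVar_other hcz hca] at hcV
              rw [hcw] at hcV
              exact hcV hwV
            rw [swapVar_other hcz hca, swapVar_other hcw hca, swapVar_other hcw hcz]
      · beta_reduce
        rw [swapVarS_ne (fun h => hvs h.symm), swapVarS_ne (fun h => hvs h.symm),
          swapVarS_ne (fun h => hvs h.symm)]
  · exact QSubstAbs.abs (fun hq => hzy (congrArg Prod.snd hq)) hzY hsub
/-- Existence of capture-avoiding substitution along any renaming. -/
theorem qsubst_exists (hreg : (Cardinal.mk var).IsRegular)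
    {qY : QTerm var varsort index bindex opsym} (hgY : QGood qY) (y : var) (ys : varsort)
    {X : QTerm var varsort index bindex opsym} (hgX : QGood X) :
    ∀ f g : varsort → var → var, SPerm f g →
      ∃ X' Z, QGood X' ∧ Alpha (vmap f X) X' ∧ QSubst X' qY y ys Z := by
  refine QGood.rec
    (motive_1 := fun X _ => ∀ f g : varsort → var → var, SPerm f g →
      ∃ X' Z, QGood X' ∧ Alpha (vmap f X) X' ∧ QSubst X' qY y ys Z)
    (motive_2 := fun A _ => ∀ f g : varsort → var → var, SPerm f g →
      ∃ A' B, QGoodAbs A' ∧ AlphaAbs (vmapAbs f A) A' ∧ QSubstAbs A' qY y ys B)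
    ?_ ?_ ?_ hgX
  · intro xs x f g hp
    rw [vmap_qVar]
    by_cases h : (xs, f xs x) = (ys, y)
    · injection h with h1 h2
      subst h1
      rw [h2]
      exact ⟨.qVar xs y, qY, QGood.qVar, Alpha.qVar, QSubst.var_eq⟩
    · exact ⟨.qVar xs (f xs x), .qVar xs (f xs x), QGood.qVar, Alpha.qVar, QSubst.var_ne h⟩
  · intro d inp binp h1 h2 h3 h4 ih1 ih2 f g hp
    have hexT : ∀ i, ∃ o1 o2 : Option (QTerm var varsort index bindex opsym),
        (inp i = none ∧ o1 = none ∧ o2 = none) ∨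
        (∃ X0 X' Z, inp i = some X0 ∧ o1 = some X' ∧ o2 = some Z ∧
          QGood X' ∧ Alpha (vmap f X0) X' ∧ QSubst X' qY y ys Z) := by
      intro i
      cases hIX : inp i with
      | none => exact ⟨none, none, Or.inl ⟨rfl, rfl, rfl⟩⟩
      | some X0 =>
        obtain ⟨X', Z, hgX', hal, hsub⟩ := ih1 i X0 hIX f g hp
        exact ⟨some X', some Z, Or.inr ⟨X0, X', Z, rfl, rfl, rfl, hgX', hal, hsub⟩⟩
    have hexA : ∀ j, ∃ o1 o2 : Option (QAbs var varsort index bindex opsym),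
        (binp j = none ∧ o1 = none ∧ o2 = none) ∨
        (∃ A0 A' B, binp j = some A0 ∧ o1 = some A' ∧ o2 = some B ∧
          QGoodAbs A' ∧ AlphaAbs (vmapAbs f A0) A' ∧ QSubstAbs A' qY y ys B) := by
      intro j
      cases hIA : binp j with
      | none => exact ⟨none, none, Or.inl ⟨rfl, rfl, rfl⟩⟩
      | some A0 =>
        obtain ⟨A', B, hgA', hal, hsub⟩ := ih2 j A0 hIA f g hp
        exact ⟨some A', some B, Or.inr ⟨A0, A', B, rfl, rfl, rfl, hgA', hal, hsub⟩⟩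
    choose inp' sub' hPT using hexT
    choose binp' bsub' hPA using hexA
    refine ⟨.qOp d inp' binp', .qOp d sub' bsub', ?_, ?_, ?_⟩
    · refine QGood.qOp ?_ ?_ ?_ ?_
      · intro i W hW
        rcases hPT i with ⟨_, e1, _⟩ | ⟨X0, X', Z, e0, e1, e2, hg, _, _⟩
        · rw [e1] at hW; cases hW
        · rw [e1] at hW; injection hW with hW; subst hW; exact hg
      · intro j W hW
        rcases hPA j with ⟨_, e1, _⟩ | ⟨A0, A', B, e0, e1, e2, hg, _, _⟩
        · rw [e1] at hW; cases hW
        · rw [e1] at hW; injection hW with hW; subst hW; exact hg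
      · unfold smallDom
        have : idom inp' = idom inp := by
          ext i
          simp only [idom, Set.mem_setOf_eq]
          rcases hPT i with ⟨e0, e1, _⟩ | ⟨X0, X', Z, e0, e1, e2, _, _, _⟩ <;>
            simp [e0, e1]
        rw [this]; exact h3
      · unfold smallDom
        have : idom binp' = idom binp := by
          ext j
          simp only [idom, Set.mem_setOf_eq]
          rcases hPA j with ⟨e0, e1, _⟩ | ⟨A0, A', B, e0, e1, e2, _, _, _⟩ <;>
            simp [e0, e1]
        rw [this]; exact h4
    · rw [vmap_qOp]
      refine Alpha.qOp ?_ ?_ ?_ ?_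
      · intro i
        rcases hPT i with ⟨e0, e1, _⟩ | ⟨X0, X', Z, e0, e1, e2, _, _, _⟩ <;> simp [e0, e1]
      · intro i W W' hW hW'
        rcases hPT i with ⟨e0, e1, _⟩ | ⟨X0, X', Z, e0, e1, e2, _, hal, _⟩
        · rw [e1] at hW'; cases hW'
        · rw [e0] at hW
          rw [e1] at hW'
          simp only [Option.map_some] at hW
          injection hW with hW; injection hW' with hW'
          subst hW; subst hW'
          exact hal
      · intro j
        rcases hPA j with ⟨e0, e1, _⟩ | ⟨A0, A', B, e0, e1, e2, _, _, _⟩ <;> simp [e0, e1]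
      · intro j W W' hW hW'
        rcases hPA j with ⟨e0, e1, _⟩ | ⟨A0, A', B, e0, e1, e2, _, hal, _⟩
        · rw [e1] at hW'; cases hW'
        · rw [e0] at hW
          rw [e1] at hW'
          simp only [Option.map_some] at hW
          injection hW with hW; injection hW' with hW'
          subst hW; subst hW'
          exact hal
    · refine QSubst.op ?_ ?_ ?_ ?_
      · intro i
        rcases hPT i with ⟨e0, e1, e2⟩ | ⟨X0, X', Z, e0, e1, e2, _, _, _⟩ <;> simp [e1, e2]
      · intro i W W' hW hW'
        rcases hPT i with ⟨e0, e1, _⟩ | ⟨X0, X', Z, e0, e1, e2, _, _, hsub⟩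
        · rw [e1] at hW; cases hW
        · rw [e1] at hW; rw [e2] at hW'
          injection hW with hW; injection hW' with hW'
          subst hW; subst hW'
          exact hsub
      · intro j
        rcases hPA j with ⟨e0, e1, e2⟩ | ⟨A0, A', B, e0, e1, e2, _, _, _⟩ <;> simp [e1, e2]
      · intro j W W' hW hW'
        rcases hPA j with ⟨e0, e1, _⟩ | ⟨A0, A', B, e0, e1, e2, _, _, hsub⟩
        · rw [e1] at hW; cases hW
        · rw [e1] at hW; rw [e2] at hW'
          injection hW with hW; injection hW' with hW'
          subst hW; subst hW'
          exact hsub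
  · intro xs x X0 hg ih
    exact abs_step hreg hgY y ys hg ih

/-- freshness for a substituted term decomposes into freshness for
its participants. -/
theorem fresh_subst (hinf : Cardinal.aleph0 ≤ Cardinal.mk var)
    (hreg : (Cardinal.mk var).IsRegular)
    (X Y : Term var varsort index bindex opsym) (hX : good X) (hY : good Y)
    (y z : var) (ys zs : varsort) :
    fresh zs z (subst X Y y ys) ↔
      (((zs, z) = (ys, y) ∨ fresh zs z X) ∧ (fresh ys y X ∨ fresh zs z Y)) := by
  have hgX : QGood (trep X) := hX
  have hgY : QGood (trep Y) := hY
  obtain ⟨X', Z, hgX', hal, hsub⟩ :=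
    qsubst_exists hreg hgY y ys hgX (fun _ v => v) (fun _ v => v) sperm_id
  rw [(vmap_id).1 (trep X)] at hal
  have hex : ∃ Zt, SubstRel X Y y ys Zt := by
    refine ⟨tmk Z, X', Z, ?_, rfl, hsub⟩
    calc tmk X' = tmk (trep X) := (Quot.sound hal).symm
      _ = X := Quot.out_eq X
  have hsubst_eq : subst X Y y ys = hex.choose := dif_pos hex
  obtain ⟨qX₁, qZ, hq1, hq2, hq3⟩ := hex.choose_spec
  have hfreshZ : ∀ ws w, fresh ws w hex.choose ↔ QFresh ws w qZ := by
    intro ws w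
    have : Relation.EqvGen (@Alpha var varsort index bindex opsym) (trep hex.choose) qZ :=
      Quot.eq.mp ((Quot.out_eq hex.choose).trans hq2.symm)
    exact eqvgen_fresh this ws w
  have hfreshX : ∀ ws w, fresh ws w X ↔ QFresh ws w qX₁ := by
    intro ws w
    have : Relation.EqvGen (@Alpha var varsort index bindex opsym) (trep X) qX₁ :=
      Quot.eq.mp ((Quot.out_eq X).trans hq1.symm)
    exact eqvgen_fresh this ws w
  rw [hsubst_eq]
  rw [hfreshZ zs z, hfreshX zs z, hfreshX ys y]
  exact qsubst_fresh hq3 zs z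

end Binding
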